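/- For all a, b > 0, the squared Fisher distance and the Jensen–Shannon divergence satisfy ρ(a,b)² = 2(√a − √b)² ≤ (4/ln 2)·JS(a,b), where JS(a,b) = ½( a ln(2a/(a+b)) + b ln(2b/(a+b)) ). The constant 4/ln 2 is optimal: it is attained in the limit b/a → ∞. -/

import Mathlib

open Filter

open Real Topology


private lemma logA {x : ℝ} (hx0 : 0 ≤ x) (hx1 : x ≤ 1) : Real.log (1+x) ≤ 2*x/(1+x) := by
  have h1 : (0:ℝ) < 1 + x := by linarith
  have h2 : Real.log (1+x) ≤ x := by
    have := Real.log_le_sub_one_of_pos h1; linarith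
  have h3 : x ≤ 2*x/(1+x) := by
    rw [le_div_iff₀ h1]; nlinarith
  linarith

private lemma phi_deriv {u : ℝ} (hu : 0 < u) :
    HasDerivAt (fun u : ℝ => u * (Real.log (u^2+1) - 2*Real.log u))
      (Real.log (u^2+1) - 2*Real.log u - 2/(u^2+1)) u := by
  have h1 : (0:ℝ) < u^2 + 1 := by positivity
  have hL : HasDerivAt (fun u : ℝ => Real.log (u^2+1) - 2*Real.log u)
      (2*u/(u^2+1) - 2*(1/u)) u := by
    have ha : HasDerivAt (fun u : ℝ => u^2+1) (2*u) u := by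
      simpa using ((hasDerivAt_pow 2 u).add_const 1)
    have hb : HasDerivAt (fun u : ℝ => Real.log (u^2+1)) (2*u/(u^2+1)) u :=
      ha.log h1.ne'
    have hc : HasDerivAt (fun u : ℝ => 2*Real.log u) (2*(1/u)) u := by
      simpa using ((Real.hasDerivAt_log hu.ne').const_mul 2)
    exact hb.sub hc
  have := (hasDerivAt_id u).mul hL
  refine this.congr_deriv ?_
  simp only [id]
  field_simp
  ring

private lemma log_id {x : ℝ} (hx : 0 < x) :
    Real.log (x^2+1) - 2*Real.log x = Real.log (1 + 1/x^2) := by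
  have e : (1 + 1/x^2) = (x^2+1)/x^2 := by field_simp
  rw [e, Real.log_div (by positivity) (by positivity), Real.log_pow]
  push_cast; ring

private lemma phi_le {u : ℝ} (hu : 1 ≤ u) :
    u * (Real.log (u^2+1) - 2*Real.log u) ≤ Real.log 2 := by
  have key : AntitoneOn (fun u : ℝ => u * (Real.log (u^2+1) - 2*Real.log u)) (Set.Ici 1) := by
    apply antitoneOn_of_deriv_nonpos (convex_Ici 1)
    · apply ContinuousOn.mul continuousOn_id
      apply ContinuousOn.sub
      · exact ContinuousOn.log (by fun_prop) (fun x hx => by simp at hx; positivity)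
      · exact continuousOn_const.mul (ContinuousOn.log continuousOn_id
          (fun x hx => by simp at hx ⊢; linarith))
    · intro x hx
      rw [interior_Ici] at hx
      exact (phi_deriv (by simp at hx; linarith)).differentiableAt.differentiableWithinAt
    · intro x hx
      rw [interior_Ici] at hx
      simp only [Set.mem_Ioi] at hx
      have hx0 : (0:ℝ) < x := by linarith
      rw [(phi_deriv hx0).deriv, log_id hx0]
      have hle : Real.log (1 + 1/x^2) ≤ 2*(1/x^2)/(1+1/x^2) := logA (by positivity) (by
        rw [div_le_one (by positivity)]; nlinarith)
      have e2 : 2*(1/x^2)/(1+1/x^2) = 2/(x^2+1) := by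
        rw [div_eq_div_iff (by positivity) (by positivity)]; field_simp
      linarith [e2 ▸ hle]
  have := key (Set.self_mem_Ici) (Set.mem_Ici.mpr hu) hu
  norm_num at this
  linarith


noncomputable def Fjs (u : ℝ) : ℝ :=
  2*u*Real.log 2 + 2*u^2*Real.log u - (1+u^2)*Real.log (1+u^2)

-- derivative of F
lemma F_deriv {u : ℝ} (hu : 0 < u) :
    HasDerivAt Fjs (2*Real.log 2 - 2*(u * (Real.log (u^2+1) - 2*Real.log u))) u := by
  have h1 : (0:ℝ) < 1 + u^2 := by positivity
  have ha : HasDerivAt (fun u : ℝ => 2*u*Real.log 2) (2*Real.log 2) u := by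
    simpa [mul_comm, mul_assoc] using (hasDerivAt_id u).const_mul (2*Real.log 2)
  have hsq : HasDerivAt (fun u : ℝ => u^2) (2*u) u := by
    simpa using hasDerivAt_pow 2 u
  have hb : HasDerivAt (fun u : ℝ => 2*u^2*Real.log u) (2*(2*u)*Real.log u + 2*u^2*(1/u)) u := by
    have := ((hsq.const_mul 2).mul (Real.hasDerivAt_log hu.ne'))
    refine this.congr_deriv ?_
    ring
  have hc : HasDerivAt (fun u : ℝ => (1+u^2)*Real.log (1+u^2))
      ((2*u)*Real.log (1+u^2) + (1+u^2)*(2*u/(1+u^2))) u := by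
    have h2 : HasDerivAt (fun u : ℝ => 1+u^2) (2*u) u := by simpa using hsq.const_add 1
    exact h2.mul (h2.log h1.ne')
  have := (ha.add hb).sub hc
  refine this.congr_deriv ?_
  have e1 : (1+u^2) * (2*u/(1+u^2)) = 2*u := by field_simp
  rw [e1]
  have e2 : Real.log (u^2+1) = Real.log (1+u^2) := by ring_nf
  rw [e2]
  field_simp
  ring

lemma F_nonneg_ge_one {u : ℝ} (hu : 1 ≤ u) : 0 ≤ Fjs u := by
  have key : MonotoneOn Fjs (Set.Ici 1) := by
    apply monotoneOn_of_deriv_nonneg (convex_Ici 1)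
    · intro x hx
      simp only [Set.mem_Ici] at hx
      exact (F_deriv (by linarith)).continuousAt.continuousWithinAt
    · intro x hx
      rw [interior_Ici] at hx
      exact (F_deriv (by simp at hx; linarith)).differentiableAt.differentiableWithinAt
    · intro x hx
      rw [interior_Ici] at hx
      simp only [Set.mem_Ioi] at hx
      rw [(F_deriv (by linarith)).deriv]
      have := phi_le (le_of_lt hx)
      linarith
  have h1 : Fjs 1 = 0 := by simp [Fjs]; norm_num
  have := key Set.self_mem_Ici (Set.mem_Ici.mpr hu) hu
  rw [h1] at this
  exact this

lemma F_symm {u : ℝ} (hu : 0 < u) : Fjs u = u^2 * Fjs (1/u) := by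
  have hu' : u ≠ 0 := hu.ne'
  simp only [Fjs]
  rw [Real.log_div one_ne_zero hu', Real.log_one]
  have e : (1 + (1/u)^2) = (u^2+1)/u^2 := by field_simp
  rw [e, Real.log_div (by positivity) (by positivity), Real.log_pow]
  have e2 : Real.log (u^2+1) = Real.log (1+u^2) := by ring_nf
  rw [e2]
  push_cast
  field_simp
  ring

lemma F_nonneg {u : ℝ} (hu : 0 < u) : 0 ≤ Fjs u := by
  rcases le_or_gt 1 u with h | h
  · exact F_nonneg_ge_one h
  · rw [F_symm hu]
    have : (1:ℝ) ≤ 1/u := by rw [le_div_iff₀ hu]; linarith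
    have := F_nonneg_ge_one this
    positivity

lemma main_ineq (a b : ℝ) (ha : 0 < a) (hb : 0 < b) :
    2 * (Real.sqrt a - Real.sqrt b) ^ 2
      ≤ (4 / Real.log 2) *
        ((1 / 2) * (a * Real.log (2 * a / (a + b)) + b * Real.log (2 * b / (a + b)))) := by
  have hab : (0:ℝ) < a + b := by linarith
  have hsa : (0:ℝ) < Real.sqrt a := Real.sqrt_pos.mpr ha
  have hsb : (0:ℝ) < Real.sqrt b := Real.sqrt_pos.mpr hb
  set u : ℝ := Real.sqrt b / Real.sqrt a with hu_def
  have hu : 0 < u := by positivity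
  have hua : Real.sqrt a ^ 2 = a := Real.sq_sqrt ha.le
  have hub : Real.sqrt b ^ 2 = b := Real.sq_sqrt hb.le
  have hu2 : u^2 = b/a := by rw [hu_def, div_pow, hua, hub]
  have hlogu : Real.log u = (Real.log b - Real.log a)/2 := by
    rw [hu_def, Real.log_div hsb.ne' hsa.ne', Real.log_sqrt ha.le, Real.log_sqrt hb.le]
    ring
  have h1u2 : 1 + u^2 = (a+b)/a := by rw [hu2]; field_simp
  have hlog1u2 : Real.log (1+u^2) = Real.log (a+b) - Real.log a := by
    rw [h1u2, Real.log_div hab.ne' ha.ne']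
  have hau : a * u = Real.sqrt a * Real.sqrt b := by
    rw [hu_def, mul_div_assoc', div_eq_iff hsa.ne']
    nlinarith [hua]
  have e0 : a * (2*u*Real.log 2) = 2*(Real.sqrt a*Real.sqrt b)*Real.log 2 := by
    rw [← hau]; ring
  have e1 : a * (2*u^2*Real.log u) = b*(Real.log b - Real.log a) := by
    rw [hu2, hlogu]; field_simp
  have e2 : a * ((1+u^2)*Real.log (1+u^2)) = (a+b)*(Real.log (a+b) - Real.log a) := by
    rw [hlog1u2, h1u2]; field_simp
  have key : 0 ≤ 2*(Real.sqrt a * Real.sqrt b)*Real.log 2 + a*Real.log a + b*Real.log b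
      - (a+b)*Real.log (a+b) := by
    have h : 0 ≤ a * Fjs u := mul_nonneg ha.le (F_nonneg hu)
    have e : a * Fjs u = a*(2*u*Real.log 2) + a*(2*u^2*Real.log u)
        - a*((1+u^2)*Real.log (1+u^2)) := by
      simp only [Fjs]; ring
    rw [e, e0, e1, e2] at h
    nlinarith [h]
  have hlog2 : 0 < Real.log 2 := Real.log_pos one_lt_two
  have ea : Real.log (2*a/(a+b)) = Real.log 2 + Real.log a - Real.log (a+b) := by
    rw [Real.log_div (by positivity) hab.ne', Real.log_mul two_ne_zero ha.ne']
  have eb : Real.log (2*b/(a+b)) = Real.log 2 + Real.log b - Real.log (a+b) := by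
    rw [Real.log_div (by positivity) hab.ne', Real.log_mul two_ne_zero hb.ne']
  rw [ea, eb, div_mul_eq_mul_div, le_div_iff₀ hlog2]
  have esq : (Real.sqrt a - Real.sqrt b)^2 = a - 2*(Real.sqrt a*Real.sqrt b) + b := by
    nlinarith [hua, hub]
  rw [esq]
  have expand : 4*((1/2)*(a*(Real.log 2 + Real.log a - Real.log (a+b))
        + b*(Real.log 2 + Real.log b - Real.log (a+b))))
      - 2*(a - 2*(Real.sqrt a*Real.sqrt b) + b)*Real.log 2
      = 2*(2*(Real.sqrt a*Real.sqrt b)*Real.log 2 + a*Real.log a + b*Real.log b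
        - (a+b)*Real.log (a+b)) := by ring
  linarith [key, expand]

/-- `ρ(a,b)² ≤ (4/ln 2)·JS(a,b)`, and the constant `4/ln 2` is
optimal: it is attained in the limit `b/a → ∞`. -/
theorem fisher_sq_le_js_optimal :
    (∀ a b : ℝ, 0 < a → 0 < b →
      2 * (Real.sqrt a - Real.sqrt b) ^ 2
        ≤ (4 / Real.log 2) *
          ((1 / 2) * (a * Real.log (2 * a / (a + b)) + b * Real.log (2 * b / (a + b))))) ∧
    Tendsto (fun b : ℝ =>
        (2 * (Real.sqrt 1 - Real.sqrt b) ^ 2) /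
          ((1 / 2) * (1 * Real.log (2 * 1 / (1 + b)) + b * Real.log (2 * b / (1 + b)))))
      atTop (nhds (4 / Real.log 2)) := by
  constructor
  · exact fun a b ha hb => main_ineq a b ha hb
  · set N : ℝ → ℝ := fun b => 2 * (Real.sqrt 1 - Real.sqrt b) ^ 2 with hN_def
    set D : ℝ → ℝ := fun b =>
      (1 / 2) * (1 * Real.log (2 * 1 / (1 + b)) + b * Real.log (2 * b / (1 + b))) with hD_def
    have hlog2 : (0:ℝ) < Real.log 2 := Real.log_pos one_lt_two
    -- numerator / b → 2
    have hN : Tendsto (fun b => N b / b) atTop (𝓝 2) := by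
      have hsq : Tendsto Real.sqrt atTop atTop := by
        apply tendsto_atTop_atTop_of_monotone (fun x y h => Real.sqrt_le_sqrt h)
        intro c
        exact ⟨(max c 0)^2, by
          rw [Real.sqrt_sq (le_max_right c 0)]; exact le_max_left c 0⟩
      have hs : Tendsto (fun b : ℝ => (Real.sqrt b)⁻¹) atTop (𝓝 0) :=
        hsq.inv_tendsto_atTop
      have h2 : Tendsto (fun b : ℝ => 2 * ((Real.sqrt b)⁻¹ - 1)^2) atTop (𝓝 (2*((0-1)^2))) :=
        (((hs.sub tendsto_const_nhds).pow 2).const_mul 2)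
      norm_num at h2
      apply h2.congr'
      filter_upwards [eventually_ge_atTop (1:ℝ)] with b hb
      have hb0 : (0:ℝ) < b := by linarith
      have hsb : (0:ℝ) < Real.sqrt b := Real.sqrt_pos.mpr hb0
      have hub : Real.sqrt b ^ 2 = b := Real.sq_sqrt hb0.le
      simp only [hN_def, Real.sqrt_one]
      rw [eq_div_iff hb0.ne']
      have e : ((Real.sqrt b)⁻¹ - 1) = (1 - Real.sqrt b)/Real.sqrt b := by
        field_simp
      rw [e, div_pow, hub]
      field_simp
    -- denominator / b → log 2 / 2
    have hD : Tendsto (fun b => D b / b) atTop (𝓝 (1/2 * Real.log 2)) := by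
      have hlogdiv : Tendsto (fun x : ℝ => Real.log x / x) atTop (𝓝 0) :=
        Real.isLittleO_log_id_atTop.tendsto_div_nhds_zero
      -- log(1+b)/b → 0
      have h1b : Tendsto (fun b : ℝ => (1:ℝ) + b) atTop atTop :=
        tendsto_atTop_add_const_left _ 1 tendsto_id
      have hA : Tendsto (fun b : ℝ => Real.log (1+b) / (1+b)) atTop (𝓝 0) :=
        hlogdiv.comp h1b
      have hB : Tendsto (fun b : ℝ => (1+b)/b) atTop (𝓝 1) := by
        have : Tendsto (fun b : ℝ => b⁻¹ + 1) atTop (𝓝 (0+1)) :=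
          tendsto_inv_atTop_zero.add tendsto_const_nhds
        norm_num at this
        apply this.congr'
        filter_upwards [eventually_ge_atTop (1:ℝ)] with b hb
        have hb0 : b ≠ 0 := by positivity
        field_simp
      have hAB : Tendsto (fun b : ℝ => Real.log (1+b) / b) atTop (𝓝 0) := by
        have := hA.mul hB
        norm_num at this
        apply this.congr'
        filter_upwards [eventually_ge_atTop (1:ℝ)] with b hb
        have h1b0 : (1:ℝ) + b ≠ 0 := by positivity
        field_simp
      have hC : Tendsto (fun b : ℝ => Real.log 2 / b) atTop (𝓝 0) :=
        tendsto_const_nhds.div_atTop tendsto_id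
      have t1 : Tendsto (fun b : ℝ => (Real.log 2 - Real.log (1+b))/b) atTop (𝓝 0) := by
        have := hC.sub hAB
        norm_num at this
        apply this.congr'
        filter_upwards [eventually_ge_atTop (1:ℝ)] with b hb
        ring
      have t2 : Tendsto (fun b : ℝ => Real.log (2*b/(1+b))) atTop (𝓝 (Real.log 2)) := by
        have hinner : Tendsto (fun b : ℝ => 2*b/(1+b)) atTop (𝓝 2) := by
          have : Tendsto (fun b : ℝ => 2/(b⁻¹+1)) atTop (𝓝 (2/(0+1))) :=
            tendsto_const_nhds.div (tendsto_inv_atTop_zero.add tendsto_const_nhds) (by norm_num)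
          norm_num at this
          apply this.congr'
          filter_upwards [eventually_ge_atTop (1:ℝ)] with b hb
          have hb0 : b ≠ 0 := by positivity
          have h1b0 : (1:ℝ) + b ≠ 0 := by positivity
          rw [div_eq_div_iff (by positivity) (by positivity)]
          field_simp
        exact ((Real.continuousAt_log (by norm_num)).tendsto.comp hinner)
      have h12 : Tendsto (fun b : ℝ => (1/2:ℝ) * ((Real.log 2 - Real.log (1+b))/b
          + Real.log (2*b/(1+b)))) atTop (𝓝 ((1/2:ℝ) * (0 + Real.log 2))) :=
        (t1.add t2).const_mul (1/2 : ℝ)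
      rw [zero_add] at h12
      apply h12.congr'
      filter_upwards [eventually_ge_atTop (1:ℝ)] with b hb
      have hb0 : (0:ℝ) < b := by linarith
      have h1b0 : (0:ℝ) < 1 + b := by linarith
      have elog : Real.log (2*1/(1+b)) = Real.log 2 - Real.log (1+b) := by
        rw [mul_one, Real.log_div two_ne_zero h1b0.ne']
      simp only [hD_def, one_mul, elog]
      field_simp
    -- combine
    have hfin := hN.div hD (by positivity)
    have heq : (2:ℝ) / (1/2 * Real.log 2) = 4 / Real.log 2 := by
      rw [div_eq_div_iff (by positivity) hlog2.ne']; ring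
    rw [heq] at hfin
    apply hfin.congr'
    filter_upwards [eventually_ge_atTop (1:ℝ)] with b hb
    have hb0 : b ≠ 0 := by positivity
    simp only [Pi.div_apply]
    show N b / b / (D b / b) = N b / D b
    rw [div_div_div_comm, div_self hb0, div_one]
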